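/- For all sufficiently large x, the number of ordered triples (p1, p2, p3) of primes with x < p_i ≤ 2x such that x^{1/2} log x < P(p1+p2) ≤ 2 x^{1/2} log x, x^{1/2} log x < P(p1+p3) ≤ 2 x^{1/2} log x, and P(p1+p3) = P(p2+p3), is O(x^{5/2}). -/

import Mathlib

open Finset Real

def maxPrimeFac (n : ℕ) : ℕ := n.primeFactors.sup id

noncomputable def primesIn (a b : ℝ) : Finset ℕ :=
  (Finset.Icc 1 ⌈b⌉₊).filter fun n => n.Prime ∧ a < (n : ℝ) ∧ (n : ℝ) ≤ b

lemma maxPrimeFac_dvd (n : ℕ) (hn : 2 ≤ n) : maxPrimeFac n ∣ n := by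
  obtain ⟨i, hi, hsup⟩ := Finset.exists_mem_eq_sup n.primeFactors
    (Nat.nonempty_primeFactors.mpr hn) id
  rw [maxPrimeFac, hsup]
  exact Nat.dvd_of_mem_primeFactors hi

lemma count_shift (N c r : ℕ) (hr : 0 < r) :
    ((Finset.Icc 1 N).filter fun n => r ∣ n + c).card ≤ (N + c) / r + 1 := by
  classical
  have h := Finset.card_le_card_of_injOn (s := (Finset.Icc 1 N).filter fun n => r ∣ n + c)
    (t := Finset.Icc 0 ((N + c) / r)) (fun n => (n + c) / r) ?_ ?_
  · simpa using h
  · intro n hn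
    simp only [Finset.coe_filter, Set.mem_setOf_eq, Finset.mem_coe, Finset.mem_filter, Finset.mem_Icc] at hn
    exact Finset.mem_Icc.mpr ⟨Nat.zero_le _, Nat.div_le_div_right (by omega)⟩
  · intro a ha b hb hab
    simp only [Finset.coe_filter, Set.mem_setOf_eq, Finset.mem_Icc] at ha hb
    obtain ⟨-, k, hk⟩ := ha
    obtain ⟨-, l, hl⟩ := hb
    dsimp only at hab
    rw [hk, hl, Nat.mul_div_cancel_left _ hr, Nat.mul_div_cancel_left _ hr] at hab
    subst hab
    omega

theorem stmt_6 :
    ∃ C : ℝ, 0 < C ∧ ∃ x0 : ℝ, ∀ x : ℝ, x0 ≤ x →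
      (((primesIn x (2 * x) ×ˢ primesIn x (2 * x) ×ˢ primesIn x (2 * x)).filter
          fun t =>
            (Real.sqrt x * Real.log x < (maxPrimeFac (t.1 + t.2.1) : ℝ) ∧
              (maxPrimeFac (t.1 + t.2.1) : ℝ) ≤ 2 * Real.sqrt x * Real.log x) ∧
            (Real.sqrt x * Real.log x < (maxPrimeFac (t.1 + t.2.2) : ℝ) ∧
              (maxPrimeFac (t.1 + t.2.2) : ℝ) ≤ 2 * Real.sqrt x * Real.log x) ∧
            maxPrimeFac (t.1 + t.2.2) = maxPrimeFac (t.2.1 + t.2.2)).card : ℝ)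
        ≤ C * x ^ ((5 : ℝ) / 2) := by
  classical
  refine ⟨63, by norm_num, 10, fun x hx => ?_⟩
  have hx1 : (1 : ℝ) ≤ x := by linarith
  have hx0 : (0 : ℝ) < x := by linarith
  have hsqrt1 : (1 : ℝ) ≤ Real.sqrt x := by
    rw [show (1:ℝ) = Real.sqrt 1 from (Real.sqrt_one).symm]
    exact Real.sqrt_le_sqrt hx1
  have hsqrt0 : (0 : ℝ) < Real.sqrt x := by linarith
  have hlog1 : (1 : ℝ) ≤ Real.log x := by
    rw [show (1:ℝ) = Real.log (Real.exp 1) from (Real.log_exp 1).symm]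
    exact Real.log_le_log (Real.exp_pos 1) (le_trans (by
      have := Real.exp_one_lt_d9; linarith) hx)
  have hsl0 : (0 : ℝ) < Real.sqrt x * Real.log x := by positivity
  set A := primesIn x (2 * x) with hA
  set N := ⌈2 * x⌉₊ with hN
  have hAsub : A ⊆ Finset.Icc 1 N := Finset.filter_subset _ _
  have hAcard : (A.card : ℝ) ≤ 3 * x := by
    have h1 : A.card ≤ N := by
      simpa using Finset.card_le_card hAsub
    have h2 : (N : ℝ) ≤ 3 * x := by
      have := Nat.ceil_lt_add_one (by positivity : (0:ℝ) ≤ 2 * x)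
      linarith
    exact le_trans (by exact_mod_cast h1) h2
  have hNle : (N : ℝ) ≤ 3 * x := by
    have := Nat.ceil_lt_add_one (by positivity : (0:ℝ) ≤ 2 * x)
    linarith
  set S := ((A ×ˢ A ×ˢ A).filter
          fun t : ℕ × ℕ × ℕ =>
            (Real.sqrt x * Real.log x < (maxPrimeFac (t.1 + t.2.1) : ℝ) ∧
              (maxPrimeFac (t.1 + t.2.1) : ℝ) ≤ 2 * Real.sqrt x * Real.log x) ∧
            (Real.sqrt x * Real.log x < (maxPrimeFac (t.1 + t.2.2) : ℝ) ∧
              (maxPrimeFac (t.1 + t.2.2) : ℝ) ≤ 2 * Real.sqrt x * Real.log x) ∧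
            maxPrimeFac (t.1 + t.2.2) = maxPrimeFac (t.2.1 + t.2.2)) with hS
  set P := (A ×ˢ A).filter
      (fun p : ℕ × ℕ => Real.sqrt x * Real.log x < (maxPrimeFac (p.1 + p.2) : ℝ)) with hP
  set F : ℕ × ℕ → Finset ℕ :=
      fun p => A.filter fun n => maxPrimeFac (p.1 + p.2) ∣ n + p.2 with hF
  -- step 1: S.card ≤ (P.sigma F).card
  have step1 : S.card ≤ (P.sigma fun p => F p).card := by
    apply Finset.card_le_card_of_injOn (fun t => ⟨(t.1, t.2.2), t.2.1⟩)
    · intro t ht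
      simp only [Finset.mem_coe, hS, Finset.coe_filter, Set.mem_setOf_eq, Finset.mem_filter, Finset.mem_product] at ht
      obtain ⟨⟨h1, h2, h3⟩, _, ⟨h5, _⟩, h7⟩ := ht
      have hp2 : 2 ≤ t.2.1 + t.2.2 := by
        have ha2 : 1 ≤ t.2.1 := (Finset.mem_Icc.mp (hAsub h2)).1
        have ha3 : 1 ≤ t.2.2 := (Finset.mem_Icc.mp (hAsub h3)).1
        omega
      refine Finset.mem_sigma.mpr ⟨?_, ?_⟩
      · exact Finset.mem_filter.mpr ⟨Finset.mem_product.mpr ⟨h1, h3⟩, h5⟩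
      · refine Finset.mem_filter.mpr ⟨h2, ?_⟩
        rw [h7]
        exact maxPrimeFac_dvd _ hp2
    · intro a _ b _ hab
      simp only [Sigma.mk.inj_iff, Prod.mk.injEq, heq_eq_eq] at hab
      obtain ⟨⟨h1, h2⟩, h3⟩ := hab
      exact Prod.ext h1 (Prod.ext h3 h2)
  rw [Finset.card_sigma] at step1
  -- step 2: each fiber has card ≤ 7 √x
  have step2 : ∀ p ∈ P, ((F p).card : ℝ) ≤ 7 * Real.sqrt x := by
    intro p hp
    simp only [hP, Finset.mem_filter, Finset.mem_product] at hp
    obtain ⟨⟨hp1, hp2⟩, hr⟩ := hp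
    set r := maxPrimeFac (p.1 + p.2) with hrdef
    have hr0 : 0 < r := by
      by_contra h
      push_neg at h
      interval_cases r
      simp at hr
      linarith
    have hrR : (0 : ℝ) < r := by exact_mod_cast hr0
    have hc : p.2 ≤ N := (Finset.mem_Icc.mp (hAsub hp2)).2
    have hcount : (F p).card ≤ (N + p.2) / r + 1 := by
      refine le_trans (Finset.card_le_card ?_) (count_shift N p.2 r hr0)
      exact Finset.filter_subset_filter _ hAsub
    have hcast : ((F p).card : ℝ) ≤ (N + p.2 : ℕ) / (r : ℝ) + 1 := by
      calc ((F p).card : ℝ) ≤ (((N + p.2) / r + 1 : ℕ) : ℝ) := by exact_mod_cast hcount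
        _ ≤ (N + p.2 : ℕ) / (r : ℝ) + 1 := by
            push_cast
            have := Nat.cast_div_le (α := ℝ) (m := N + p.2) (n := r)
            push_cast at this
            linarith
    have h2N : ((N : ℝ) + p.2) ≤ 6 * x := by
      have : (p.2 : ℝ) ≤ N := by exact_mod_cast hc
      linarith
    have hdiv : ((N + p.2 : ℕ) : ℝ) / (r : ℝ) ≤ 6 * x / (Real.sqrt x * Real.log x) := by
      push_cast
      apply div_le_div₀ (by positivity) (by linarith) hsl0 (le_of_lt hr)
    have hfin : 6 * x / (Real.sqrt x * Real.log x) ≤ 6 * Real.sqrt x := by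
      rw [div_le_iff₀ hsl0]
      have hxs : x = Real.sqrt x * Real.sqrt x := (Real.mul_self_sqrt hx0.le).symm
      calc 6 * x = 6 * (Real.sqrt x * Real.sqrt x) := by rw [← hxs]
        _ ≤ 6 * (Real.sqrt x * Real.sqrt x) * Real.log x := by nlinarith
        _ = 6 * Real.sqrt x * (Real.sqrt x * Real.log x) := by ring
    have : ((F p).card : ℝ) ≤ 6 * Real.sqrt x + 1 := by linarith
    linarith
  -- assemble
  have hsum : ((∑ p ∈ P, (F p).card : ℕ) : ℝ) ≤ (P.card : ℝ) * (7 * Real.sqrt x) := by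
    push_cast
    calc (∑ p ∈ P, ((F p).card : ℝ)) ≤ P.card • (7 * Real.sqrt x) :=
          Finset.sum_le_card_nsmul _ _ _ step2
      _ = (P.card : ℝ) * (7 * Real.sqrt x) := by rw [nsmul_eq_mul]
  have hPcard : (P.card : ℝ) ≤ 9 * x ^ 2 := by
    have h1 : P.card ≤ (A ×ˢ A).card := Finset.card_le_card (Finset.filter_subset _ _)
    rw [Finset.card_product] at h1
    have : ((A.card * A.card : ℕ) : ℝ) ≤ 3 * x * (3 * x) := by
      push_cast
      have h0 : (0:ℝ) ≤ (A.card : ℝ) := Nat.cast_nonneg _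
      nlinarith
    calc (P.card : ℝ) ≤ ((A.card * A.card : ℕ) : ℝ) := by exact_mod_cast h1
      _ ≤ 3 * x * (3 * x) := this
      _ = 9 * x ^ 2 := by ring
  have hrpow : x ^ ((5:ℝ)/2) = x ^ 2 * Real.sqrt x := by
    rw [Real.sqrt_eq_rpow, show ((5:ℝ)/2) = (2:ℝ) + 1/2 by norm_num, Real.rpow_add hx0,
      show (2:ℝ) = ((2:ℕ):ℝ) by norm_num, Real.rpow_natCast]
  have final : ((S.card : ℕ) : ℝ) ≤ 63 * (x ^ 2 * Real.sqrt x) := by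
    have h1 : ((S.card : ℕ) : ℝ) ≤ ((∑ p ∈ P, (F p).card : ℕ) : ℝ) := by exact_mod_cast step1
    have h2 : (P.card : ℝ) * (7 * Real.sqrt x) ≤ 9 * x ^ 2 * (7 * Real.sqrt x) := by
      have : (0:ℝ) ≤ 7 * Real.sqrt x := by positivity
      nlinarith
    nlinarith [h1, hsum, h2]
  rw [hrpow]
  exact final
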